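/- For Jacobi weights w_{α,β}(x) = (1−x)^α(1+x)^β with α, β > −1 and m ∈ ℕ, the weight w_{α+m,β} is not a Darboux transformation of w_{α,β}. -/

import Mathlib

open Polynomial Matrix MeasureTheory

section ScalarFramework

/-- Right action of the scalar differential operator `∑_j ∂^j f_j` on a polynomial. -/
noncomputable def sAct (F : ℕ →₀ Polynomial ℂ) (p : Polynomial ℂ) : Polynomial ℂ :=
  F.sum fun j c => Polynomial.derivative^[j] p * c

/-- A map on polynomials is a (scalar) differential operator with polynomial coefficients. -/
def IsSDiffOp (L : Polynomial ℂ → Polynomial ℂ) : Prop :=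
  ∃ F : ℕ →₀ Polynomial ℂ, ∀ p, L p = sAct F p

/-- A degree-preserving scalar differential operator. -/
def SDegPres (L : Polynomial ℂ → Polynomial ℂ) : Prop :=
  IsSDiffOp L ∧ ∀ p : Polynomial ℂ, (L p).degree = p.degree

/-- `w` is a scalar weight on `S`: positive on `S` with finite moments. -/
def IsScalarWeight (S : Set ℝ) (w : ℝ → ℝ) : Prop :=
  MeasurableSet S ∧ volume S ≠ 0 ∧ (∀ x ∈ S, 0 < w x) ∧
  ∀ k : ℕ, IntegrableOn (fun x => w x * |x| ^ k) S

/-- The inner product `⟨p,q⟩ = ∫_S p(x) w(x) conj (q(x)) dx`. -/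
noncomputable def sInner (S : Set ℝ) (w : ℝ → ℝ) (p q : Polynomial ℂ) : ℂ :=
  ∫ x in S, p.eval (x : ℂ) * (w x : ℂ) * (starRingEnd ℂ) (q.eval (x : ℂ))

/-- `p` is the sequence of monic orthogonal polynomials for the scalar weight `w` on `S`. -/
def SMonicOPS (S : Set ℝ) (w : ℝ → ℝ) (p : ℕ → Polynomial ℂ) : Prop :=
  (∀ k, (p k).Monic ∧ (p k).natDegree = k) ∧
  ∀ k l, k ≠ l → sInner S w (p k) (p l) = 0

/-- `L ∈ D(w₁, w₂)`: a scalar differential operator with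
`p_k^{w₁} · L = λ_k q_k^{w₂}` for all `k`. -/
def SInMod (p q : ℕ → Polynomial ℂ) (L : Polynomial ℂ → Polynomial ℂ) : Prop :=
  IsSDiffOp L ∧ ∀ k, ∃ lam : ℂ, L (p k) = Polynomial.C lam * q k

/-- `L ∈ D(w)`: the monic OPS `p` of `w` are eigenfunctions of `L`. -/
def SInDW (p : ℕ → Polynomial ℂ) (L : Polynomial ℂ → Polynomial ℂ) : Prop :=
  SInMod p p L

/-- The weight of `q` is a Darboux transformation of the weight of `p` (where `p`, `q`
are the respective monic OPS): there is `D = V N ∈ D(w_p)` with `V`, `N`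
degree-preserving and `p_k · V = c_k q_k`, `c_k ≠ 0`. -/
def SDarboux (p q : ℕ → Polynomial ℂ) : Prop :=
  ∃ V Nd : Polynomial ℂ → Polynomial ℂ, SDegPres V ∧ SDegPres Nd ∧
    SInDW p (fun r => Nd (V r)) ∧
    ∀ k, ∃ c : ℂ, c ≠ 0 ∧ V (p k) = Polynomial.C c * q k

/-- The shifted Hermite weight `e^{-x² + 2bx}` on `ℝ`. -/
noncomputable def hermiteW (b : ℝ) : ℝ → ℝ := fun x => Real.exp (-x ^ 2 + 2 * b * x)

/-- The Laguerre weight `e^{-x} x^α` on `(0, ∞)`. -/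
noncomputable def laguerreW (α : ℝ) : ℝ → ℝ := fun x => Real.exp (-x) * x ^ α

/-- The Jacobi weight `(1-x)^α (1+x)^β` on `(-1, 1)`. -/
noncomputable def jacobiW (α β : ℝ) : ℝ → ℝ := fun x => (1 - x) ^ α * (1 + x) ^ β

end ScalarFramework


noncomputable section

namespace S16
open Set Filter Topology

/-- linear change of variable `x = 1 - 2t`, i.e. `L = -2X + 1`. -/
def LL : Polynomial ℂ := C (-2 : ℂ) * X + C 1
/-- inverse change of variable `t = (1-x)/2`. -/
def LI : Polynomial ℂ := C (-(2:ℂ)⁻¹) * X + C (2⁻¹)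

lemma LL_comp_LI : LL.comp LI = X := by
  simp only [LL, LI, add_comp, mul_comp, C_comp, X_comp, mul_add, ← mul_assoc, ← C_mul, ← C_add]
  norm_num

lemma LI_comp_LL : LI.comp LL = X := by
  simp only [LL, LI, add_comp, mul_comp, C_comp, X_comp, mul_add, ← mul_assoc, ← C_mul, ← C_add]
  norm_num

lemma natDegree_LL : LL.natDegree = 1 := by
  unfold LL; exact natDegree_linear (by norm_num)

lemma leadingCoeff_LL : LL.leadingCoeff = -2 := by
  unfold LL; exact leadingCoeff_linear (by norm_num)

lemma derivative_LL : derivative LL = C (-2 : ℂ) := by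
  simp [LL]

lemma derivative_LI : derivative LI = C (-(2:ℂ)⁻¹) := by
  simp [LI]

/-- the Jacobi differential operator (in the `x` variable). -/
def jacOp (a b : ℝ) (p : Polynomial ℂ) : Polynomial ℂ :=
  (1 - X ^ 2) * derivative (derivative p) +
    (C ((b : ℂ) - (a : ℂ)) - C ((a : ℂ) + (b : ℂ) + 2) * X) * derivative p

/-- the Jacobi operator transported to the `t = (1-x)/2` variable
(hypergeometric operator). -/
def delOp (a b : ℝ) (t : Polynomial ℂ) : Polynomial ℂ :=
  (X - X ^ 2) * derivative (derivative t) +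
    (C ((a : ℂ) + 1) - C ((a : ℂ) + (b : ℂ) + 2) * X) * derivative t

lemma jacOp_coeff (a b : ℝ) (t : Polynomial ℂ) (i : ℕ) :
    (jacOp a b t).coeff i
      = ((i:ℂ)+2) * ((i:ℂ)+1) * t.coeff (i+2)
        + ((b:ℂ) - (a:ℂ)) * ((i:ℂ)+1) * t.coeff (i+1)
        - ((i:ℂ) * ((i:ℂ)-1) + ((a:ℂ)+(b:ℂ)+2) * (i:ℂ)) * t.coeff i := by
  have h1 : jacOp a b t =
      (derivative (derivative t) - X * (X * derivative (derivative t)))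
      + (C ((b:ℂ) - (a:ℂ)) * derivative t - C ((a:ℂ)+(b:ℂ)+2) * (X * derivative t)) := by
    unfold jacOp; ring
  rw [h1]
  match i with
  | 0 =>
    simp only [coeff_add, coeff_sub, coeff_C_mul, mul_coeff_zero, coeff_X_zero,
      coeff_derivative, coeff_C_zero]
    push_cast
    ring
  | 1 =>
    simp only [coeff_add, coeff_sub, coeff_C_mul, coeff_X_mul, mul_coeff_zero, coeff_X_zero,
      coeff_derivative]
    push_cast
    ring
  | (n+2) =>
    simp only [coeff_add, coeff_sub, coeff_C_mul, coeff_X_mul, coeff_derivative]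
    push_cast
    ring

lemma natDegree_jacOp_le (a b : ℝ) (t : Polynomial ℂ) :
    (jacOp a b t).natDegree ≤ t.natDegree := by
  rw [natDegree_le_iff_coeff_eq_zero]
  intro N hN
  rw [jacOp_coeff]
  rw [coeff_eq_zero_of_natDegree_lt (by omega), coeff_eq_zero_of_natDegree_lt (by omega),
    coeff_eq_zero_of_natDegree_lt (by omega)]
  ring

lemma jacOp_coeff_top (a b : ℝ) (t : Polynomial ℂ) (k : ℕ) (hm : t.Monic)
    (hd : t.natDegree = k) :
    (jacOp a b t).coeff k = -(k:ℂ) * ((k:ℂ) + (a:ℂ) + (b:ℂ) + 1) := by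
  rw [jacOp_coeff]
  rw [coeff_eq_zero_of_natDegree_lt (by omega), coeff_eq_zero_of_natDegree_lt (by omega)]
  have : t.coeff k = 1 := by rw [← hd]; exact hm.coeff_natDegree
  rw [this]
  ring

lemma delOp_coeff (a b : ℝ) (t : Polynomial ℂ) (i : ℕ) :
    (delOp a b t).coeff i
      = ((i:ℂ)+1) * ((i:ℂ)+1+(a:ℂ)) * t.coeff (i+1)
        - (i:ℂ) * ((i:ℂ) + (a:ℂ) + (b:ℂ) + 1) * t.coeff i := by
  have h1 : delOp a b t =
      (X * derivative (derivative t) - X * (X * derivative (derivative t)))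
      + (C ((a:ℂ)+1) * derivative t - C ((a:ℂ)+(b:ℂ)+2) * (X * derivative t)) := by
    unfold delOp; ring
  rw [h1]
  match i with
  | 0 =>
    simp only [coeff_add, coeff_sub, coeff_C_mul, mul_coeff_zero, coeff_X_zero,
      coeff_derivative, coeff_C_zero]
    push_cast
    ring
  | 1 =>
    simp only [coeff_add, coeff_sub, coeff_C_mul, coeff_X_mul, mul_coeff_zero, coeff_X_zero,
      coeff_derivative]
    push_cast
    ring
  | (n+2) =>
    simp only [coeff_add, coeff_sub, coeff_C_mul, coeff_X_mul, coeff_derivative]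
    push_cast
    ring

lemma comp_jacOp_delOp (a b : ℝ) (r : Polynomial ℂ) :
    (jacOp a b r).comp LL = delOp a b (r.comp LL) := by
  have hLL : LL = 1 - 2 * X := by
    unfold LL
    rw [C_neg]
    simp only [map_ofNat, C_1]
    ring
  have h1 : derivative (r.comp LL) = C (-2 : ℂ) * ((derivative r).comp LL) := by
    rw [derivative_comp, derivative_LL]
  have h2 : derivative (derivative (r.comp LL))
      = C (-2 : ℂ) * (C (-2 : ℂ) * ((derivative (derivative r)).comp LL)) := by
    rw [h1, derivative_C_mul, derivative_comp, derivative_LL]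
  unfold jacOp delOp
  rw [add_comp, mul_comp, mul_comp, sub_comp, sub_comp, one_comp, mul_comp, pow_comp,
    C_comp, C_comp, X_comp, h2, h1, hLL]
  simp only [C_add, C_sub, C_neg, C_1, map_ofNat]
  ring

/-- the coefficients of the (monic-normalized-at-0) Jacobi polynomials in the
`t = (1-x)/2` variable, as polynomials in the degree parameter `ν`. -/
def cpol (a b : ℝ) : ℕ → Polynomial ℂ
  | 0 => 1
  | i + 1 => cpol a b i *
      (C ((((i : ℂ) + 1) * ((i : ℂ) + 1 + (a : ℂ)))⁻¹) *
        ((C (i : ℂ) - X) * (X + C ((i : ℂ) + (a : ℂ) + (b : ℂ) + 1))))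

/-- symmetry of the Jacobi family under `ν ↦ -(a+b+1) - ν`. -/
lemma cpol_comp_symm (a b : ℝ) (i : ℕ) :
    (cpol a b i).comp (C (-((a:ℂ)+(b:ℂ)+1)) - X) = cpol a b i := by
  induction i with
  | zero => simp [cpol]
  | succ i ih =>
    rw [cpol]
    simp only [mul_comp, sub_comp, add_comp, C_comp, X_comp, ih]
    simp only [C_add, C_neg, C_1]
    ring

/-- expansion of a polynomial in a monic triangular family. -/
lemma expand_monic (P : ℕ → Polynomial ℂ) (hmon : ∀ k, (P k).Monic)
    (hdeg : ∀ k, (P k).natDegree = k) :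
    ∀ N (r : Polynomial ℂ), r.natDegree ≤ N →
      ∃ c : ℕ → ℂ, r = ∑ l ∈ Finset.range (N+1), C (c l) * P l := by
  intro N
  induction N with
  | zero =>
    intro r hr
    refine ⟨fun _ => r.coeff 0, ?_⟩
    have hP0 : P 0 = 1 := (hmon 0).natDegree_eq_zero.mp (hdeg 0)
    rw [Finset.sum_range_one, hP0, mul_one]
    exact eq_C_of_natDegree_le_zero hr
  | succ N ih =>
    intro r hr
    have hr' : (r - C (r.coeff (N+1)) * P (N+1)).natDegree ≤ N := by
      rw [natDegree_le_iff_coeff_eq_zero]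
      intro M hM
      rw [coeff_sub, coeff_C_mul]
      rcases eq_or_lt_of_le (Nat.succ_le_of_lt hM) with h | h
      · have h1 : (P (N+1)).coeff (N+1) = 1 := by
          have := (hmon (N+1)).coeff_natDegree
          rwa [hdeg (N+1)] at this
        rw [← h]
        rw [h1, mul_one, sub_self]
      · have e1 : r.coeff M = 0 := coeff_eq_zero_of_natDegree_lt (lt_of_le_of_lt hr h)
        have e2 : (P (N+1)).coeff M = 0 :=
          coeff_eq_zero_of_natDegree_lt (by rw [hdeg]; exact h)
        rw [e1, e2, mul_zero, sub_zero]
    obtain ⟨c, hc⟩ := ih _ hr'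
    refine ⟨Function.update c (N+1) (r.coeff (N+1)), ?_⟩
    rw [Finset.sum_range_succ, Function.update_self]
    have : ∑ l ∈ Finset.range (N+1), C (Function.update c (N+1) (r.coeff (N+1)) l) * P l
        = ∑ l ∈ Finset.range (N+1), C (c l) * P l := by
      apply Finset.sum_congr rfl
      intro l hl
      rw [Function.update_of_ne (by simp at hl; omega)]
    rw [this, ← hc]
    ring

lemma iter_deriv_add (j : ℕ) (r t : Polynomial ℂ) :
    derivative^[j] (r + t) = derivative^[j] r + derivative^[j] t := by
  induction j with
  | zero => rfl
  | succ j ih => rw [Function.iterate_succ_apply', Function.iterate_succ_apply',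
      Function.iterate_succ_apply', ih, derivative_add]

lemma sAct_add (F : ℕ →₀ Polynomial ℂ) (r t : Polynomial ℂ) :
    sAct F (r + t) = sAct F r + sAct F t := by
  unfold sAct
  rw [← Finsupp.sum_add]
  apply Finsupp.sum_congr
  intro j _
  rw [iter_deriv_add, add_mul]

lemma sAct_Cmul (F : ℕ →₀ Polynomial ℂ) (c : ℂ) (r : Polynomial ℂ) :
    sAct F (C c * r) = C c * sAct F r := by
  unfold sAct
  rw [Finsupp.mul_sum]
  apply Finsupp.sum_congr
  intro j _
  rw [Polynomial.iterate_derivative_C_mul, mul_assoc]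

lemma sAct_sum (F : ℕ →₀ Polynomial ℂ) (s : Finset ℕ) (c : ℕ → ℂ) (g : ℕ → Polynomial ℂ) :
    sAct F (∑ l ∈ s, C (c l) * g l) = ∑ l ∈ s, C (c l) * sAct F (g l) := by
  induction s using Finset.induction_on with
  | empty =>
    simp [sAct]
  | @insert x s hx ih =>
    rw [Finset.sum_insert hx, Finset.sum_insert hx, sAct_add, sAct_Cmul, ih]

/-- iterated derivatives of powers of a linear polynomial. -/
lemma iterate_derivative_LI_pow (d : ℕ) :
    ∀ j, j ≤ d → ∃ sc : ℂ, derivative^[j] (LI ^ d) = C sc * LI ^ (d - j) := by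
  intro j
  induction j with
  | zero => intro _; exact ⟨1, by simp⟩
  | succ j ih =>
    intro hj
    obtain ⟨sc, hsc⟩ := ih (by omega)
    refine ⟨sc * ((d : ℂ) - j) * (-(2:ℂ)⁻¹), ?_⟩
    rw [Function.iterate_succ_apply', hsc, derivative_C_mul, derivative_pow, derivative_LI]
    have hcast : ((d - j : ℕ) : ℂ) = (d : ℂ) - (j : ℂ) := by
      push_cast [Nat.cast_sub (by omega : j ≤ d)]
      ring
    have hexp : d - j - 1 = d - (j + 1) := by omega
    rw [hexp, hcast, C_mul, C_mul]
    ring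

/-- the "window" vanishing: the operator `V` conjugated to the `t`-variable has
lower-triangular bandwidth `n`. -/
lemma window (F : ℕ →₀ Polynomial ℂ) (n : ℕ) (hn : ∀ j ∈ F.support, j ≤ n)
    (i i' : ℕ) (h : i + n < i') :
    ((sAct F (LI ^ i')).comp LL).coeff i = 0 := by
  have key : ∀ j ∈ F.support, ∀ c : Polynomial ℂ,
      ((derivative^[j] (LI ^ i') * c).comp LL).coeff i = 0 := by
    intro j hj c
    obtain ⟨sc, hsc⟩ := iterate_derivative_LI_pow i' j (by have := hn j hj; omega)
    rw [hsc]
    have h2 : (C sc * LI ^ (i' - j) * c).comp LL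
        = (C sc * c.comp LL) * X ^ (i' - j) := by
      rw [mul_comp, mul_comp, C_comp, pow_comp, LI_comp_LL]
      ring
    rw [h2, coeff_mul_X_pow']
    have : ¬ (i' - j ≤ i) := by have := hn j hj; omega
    simp [this]
  unfold sAct
  rw [Finsupp.sum, Polynomial.sum_comp, finset_sum_coeff]
  apply Finset.sum_eq_zero
  intro j hj
  exact key j hj (F j)

/-! ### Analysis: the Jacobi weight -/

lemma w_contOn (a b : ℝ) : ContinuousOn (jacobiW a b) (Set.Ioo (-1:ℝ) 1) := by
  intro x hx
  obtain ⟨hx1, hx2⟩ := hx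
  apply ContinuousAt.continuousWithinAt
  unfold jacobiW
  apply ContinuousAt.mul
  · have h : ContinuousAt ((fun s : ℝ => s ^ a) ∘ (fun y : ℝ => 1 - y)) x := by
      apply ContinuousAt.comp
      · exact Real.continuousAt_rpow_const _ _
          (Or.inl (show (1:ℝ) - x ≠ 0 from (by linarith : (0:ℝ) < 1 - x).ne'))
      · exact (continuous_const.sub continuous_id).continuousAt
    exact h
  · have h : ContinuousAt ((fun s : ℝ => s ^ b) ∘ (fun y : ℝ => 1 + y)) x := by
      apply ContinuousAt.comp
      · exact Real.continuousAt_rpow_const _ _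
          (Or.inl (show (1:ℝ) + x ≠ 0 from (by linarith : (0:ℝ) < 1 + x).ne'))
      · exact (continuous_const.add continuous_id).continuousAt
    exact h

lemma w_pos (a b : ℝ) : ∀ x ∈ Set.Ioo (-1:ℝ) 1, 0 < jacobiW a b x := by
  intro x hx
  obtain ⟨hx1, hx2⟩ := hx
  exact mul_pos (Real.rpow_pos_of_pos (by linarith) a) (Real.rpow_pos_of_pos (by linarith) b)

lemma w_int (a b : ℝ) (ha : -1 < a) (hb : -1 < b) :
    IntegrableOn (jacobiW a b) (Set.Ioo (-1:ℝ) 1) := by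
  have hbase1 : IntegrableOn (fun x : ℝ => (1+x) ^ b) (Set.Ioc (-1:ℝ) 0) := by
    have h := (intervalIntegral.intervalIntegrable_rpow' (a := 0) (b := 1) hb).comp_add_left 1
    rw [intervalIntegrable_iff_integrableOn_Ioc_of_le (by norm_num)] at h
    simpa using h
  have hbase2 : IntegrableOn (fun x : ℝ => (1-x) ^ a) (Set.Ioc (0:ℝ) 1) := by
    have h := ((intervalIntegral.intervalIntegrable_rpow' (a := 0) (b := 1) ha).comp_sub_left
      1).symm
    rw [intervalIntegrable_iff_integrableOn_Ioc_of_le (by norm_num)] at h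
    simpa using h
  have hb1 : IntegrableOn (jacobiW a b) (Set.Ioc (-1:ℝ) 0) := by
    apply Integrable.mono' (hbase1.const_mul (max (2 ^ a) 1))
    · exact ((w_contOn a b).mono
        (fun x hx => ⟨hx.1, lt_of_le_of_lt hx.2 one_pos⟩)).aestronglyMeasurable
        measurableSet_Ioc
    · rw [ae_restrict_iff' measurableSet_Ioc]
      apply ae_of_all
      intro x hx
      obtain ⟨hx1, hx2⟩ := hx
      have h1x : (0:ℝ) < 1 - x := by linarith
      have h2x : (0:ℝ) ≤ 1 + x := by linarith
      show ‖(1 - x) ^ a * (1 + x) ^ b‖ ≤ max (2 ^ a) 1 * (1 + x) ^ b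
      rw [Real.norm_eq_abs,
        abs_of_nonneg (mul_nonneg (Real.rpow_nonneg h1x.le _) (Real.rpow_nonneg h2x _))]
      apply mul_le_mul_of_nonneg_right _ (Real.rpow_nonneg h2x _)
      rcases le_or_gt 0 a with hc | hc
      · calc (1-x) ^ a ≤ 2 ^ a := Real.rpow_le_rpow h1x.le (by linarith) hc
          _ ≤ max (2 ^ a) 1 := le_max_left _ _
      · calc (1-x) ^ a ≤ 1 := Real.rpow_le_one_of_one_le_of_nonpos (by linarith) hc.le
          _ ≤ max (2 ^ a) 1 := le_max_right _ _
  have hb2 : IntegrableOn (jacobiW a b) (Set.Ioo (0:ℝ) 1) := by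
    apply Integrable.mono'
      ((hbase2.mono_set Set.Ioo_subset_Ioc_self).const_mul (max (2 ^ b) 1))
    · exact ((w_contOn a b).mono
        (fun x hx => ⟨lt_trans (by norm_num) hx.1, hx.2⟩)).aestronglyMeasurable
        measurableSet_Ioo
    · rw [ae_restrict_iff' measurableSet_Ioo]
      apply ae_of_all
      intro x hx
      obtain ⟨hx1, hx2⟩ := hx
      have h1x : (0:ℝ) ≤ 1 - x := by linarith
      have h2x : (0:ℝ) < 1 + x := by linarith
      show ‖(1 - x) ^ a * (1 + x) ^ b‖ ≤ max (2 ^ b) 1 * (1 - x) ^ a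
      rw [Real.norm_eq_abs,
        abs_of_nonneg (mul_nonneg (Real.rpow_nonneg h1x _) (Real.rpow_nonneg h2x.le _))]
      have hbound : (1+x) ^ b ≤ max (2 ^ b) 1 := by
        rcases le_or_gt 0 b with hc | hc
        · exact le_trans (Real.rpow_le_rpow h2x.le (by linarith) hc) (le_max_left _ _)
        · exact le_trans (Real.rpow_le_one_of_one_le_of_nonpos (by linarith) hc.le)
            (le_max_right _ _)
      calc (1-x) ^ a * (1+x) ^ b ≤ (1-x) ^ a * max (2 ^ b) 1 :=
            mul_le_mul_of_nonneg_left hbound (Real.rpow_nonneg h1x _)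
        _ = max (2 ^ b) 1 * (1-x) ^ a := by ring
  rw [show Set.Ioo (-1:ℝ) 1 = Set.Ioc (-1:ℝ) 0 ∪ Set.Ioo (0:ℝ) 1 from
    (Set.Ioc_union_Ioo_eq_Ioo (by norm_num) (by norm_num)).symm]
  exact hb1.union hb2

lemma int_cw (a b : ℝ) (ha : -1 < a) (hb : -1 < b) (g : ℝ → ℂ) (hg : Continuous g) :
    IntegrableOn (fun x : ℝ => (jacobiW a b x : ℂ) * g x) (Set.Ioo (-1:ℝ) 1) := by
  obtain ⟨C, hC⟩ := (isCompact_Icc (a := (-1:ℝ)) (b := 1)).exists_bound_of_continuousOn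
    hg.continuousOn
  apply Integrable.mono' ((w_int a b ha hb).const_mul C)
  · exact ((Complex.continuous_ofReal.comp_continuousOn (w_contOn a b)).mul
      hg.continuousOn).aestronglyMeasurable measurableSet_Ioo
  · rw [ae_restrict_iff' measurableSet_Ioo]
    apply ae_of_all
    intro x hx
    rw [norm_mul, Complex.norm_real, Real.norm_eq_abs, abs_of_nonneg (w_pos a b x hx).le]
    calc jacobiW a b x * ‖g x‖ ≤ jacobiW a b x * C :=
          mul_le_mul_of_nonneg_left (hC x ⟨hx.1.le, hx.2.le⟩) (w_pos a b x hx).le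
      _ = C * jacobiW a b x := by ring

lemma int_cw_real (a b : ℝ) (ha : -1 < a) (hb : -1 < b) (g : ℝ → ℝ) (hg : Continuous g) :
    IntegrableOn (fun x : ℝ => jacobiW a b x * g x) (Set.Ioo (-1:ℝ) 1) := by
  obtain ⟨C, hC⟩ := (isCompact_Icc (a := (-1:ℝ)) (b := 1)).exists_bound_of_continuousOn
    hg.continuousOn
  apply Integrable.mono' ((w_int a b ha hb).const_mul C)
  · exact ((w_contOn a b).mul hg.continuousOn).aestronglyMeasurable measurableSet_Ioo
  · rw [ae_restrict_iff' measurableSet_Ioo]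
    apply ae_of_all
    intro x hx
    rw [Real.norm_eq_abs, abs_mul, abs_of_nonneg (w_pos a b x hx).le]
    calc jacobiW a b x * |g x| ≤ jacobiW a b x * C := by
          apply mul_le_mul_of_nonneg_left _ (w_pos a b x hx).le
          have := hC x ⟨hx.1.le, hx.2.le⟩
          rwa [Real.norm_eq_abs] at this
      _ = C * jacobiW a b x := by ring

def Jb (a b : ℝ) (p q : Polynomial ℂ) : ℂ :=
  ∫ x in Set.Ioo (-1:ℝ) 1, p.eval (x : ℂ) * (jacobiW a b x : ℂ) * q.eval (x : ℂ)

lemma conj_eval (t : Polynomial ℂ) (x : ℝ) :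
    (starRingEnd ℂ) (t.eval (x:ℂ)) = (t.map (starRingEnd ℂ)).eval (x:ℂ) := by
  conv_rhs => rw [eval_eq_sum_range' (lt_of_le_of_lt natDegree_map_le
    (Nat.lt_succ_self t.natDegree))]
  rw [eval_eq_sum_range' (Nat.lt_succ_self t.natDegree), map_sum]
  apply Finset.sum_congr rfl
  intro i _
  rw [_root_.map_mul, _root_.map_pow, Complex.conj_ofReal, coeff_map]


lemma intJb' (a b : ℝ) (ha : -1 < a) (hb : -1 < b) (r t : Polynomial ℂ) :
    IntegrableOn (fun x : ℝ => r.eval (x:ℂ) * (jacobiW a b x : ℂ) * t.eval (x:ℂ))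
      (Set.Ioo (-1:ℝ) 1) := by
  have hg : Continuous (fun x : ℝ => r.eval (x:ℂ) * t.eval (x:ℂ)) :=
    (r.continuous.comp Complex.continuous_ofReal).mul
      (t.continuous.comp Complex.continuous_ofReal)
  refine (int_cw a b ha hb _ hg).congr_fun (fun x _ => by ring) measurableSet_Ioo

lemma Jb_selfconj_ne' (a b : ℝ) (ha : -1 < a) (hb : -1 < b) (r : Polynomial ℂ) (hr : r ≠ 0) :
    Jb a b r (r.map (starRingEnd ℂ)) ≠ 0 := by
  have hgcont : Continuous fun x : ℝ => Complex.normSq (r.eval (x:ℂ)) :=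
    Complex.continuous_normSq.comp (r.continuous.comp Complex.continuous_ofReal)
  have hint : IntegrableOn (fun x : ℝ => jacobiW a b x * Complex.normSq (r.eval (x:ℂ)))
      (Set.Ioo (-1:ℝ) 1) := int_cw_real a b ha hb _ hgcont
  have h1 : Jb a b r (r.map (starRingEnd ℂ))
      = ((∫ x in Set.Ioo (-1:ℝ) 1, jacobiW a b x * Complex.normSq (r.eval (x:ℂ))) : ℝ) := by
    unfold Jb
    have h2 : (∫ x in Set.Ioo (-1:ℝ) 1,
          ((jacobiW a b x * Complex.normSq (r.eval (x:ℂ)) : ℝ) : ℂ))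
        = (((∫ x in Set.Ioo (-1:ℝ) 1,
          (jacobiW a b x * Complex.normSq (r.eval (x:ℂ)) : ℝ)) : ℝ) : ℂ) :=
      integral_ofReal
    rw [← h2]
    congr 1
    funext x
    rw [← conj_eval, Complex.ofReal_mul, mul_comm (r.eval (x:ℂ)) ((jacobiW a b x : ℂ)),
      mul_assoc, Complex.mul_conj]
  have h0le : (0 : ℝ → ℝ) ≤ᵐ[volume.restrict (Set.Ioo (-1:ℝ) 1)]
      fun x : ℝ => jacobiW a b x * Complex.normSq (r.eval (x:ℂ)) := by
    apply (ae_restrict_iff' measurableSet_Ioo).2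
    apply ae_of_all
    intro x hx
    exact mul_nonneg (w_pos a b x hx).le (Complex.normSq_nonneg _)
  rw [h1, Complex.ofReal_ne_zero]
  apply ne_of_gt
  apply (setIntegral_pos_iff_support_of_nonneg_ae h0le hint).mpr
  have hfin : {x : ℝ | r.eval (x:ℂ) = 0}.Finite := by
    have h2 : {x : ℝ | r.eval (x:ℂ) = 0} = ((↑) : ℝ → ℂ) ⁻¹' {z : ℂ | r.IsRoot z} := rfl
    rw [h2]
    exact Set.Finite.preimage Complex.ofReal_injective.injOn (Polynomial.finite_setOf_isRoot hr)
  calc (0:ENNReal) < volume (Set.Ioo (-1:ℝ) 1 \ {x : ℝ | r.eval (x:ℂ) = 0}) := by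
        rw [measure_diff_null (hfin.measure_zero _), Real.volume_Ioo]
        norm_num
    _ ≤ volume (Function.support (fun x : ℝ => jacobiW a b x * Complex.normSq (r.eval (x:ℂ)))
          ∩ Set.Ioo (-1:ℝ) 1) := by
        apply measure_mono
        intro x hx
        obtain ⟨hx1, hx2⟩ := hx
        refine ⟨?_, hx1⟩
        simp only [Function.mem_support]
        exact ne_of_gt (mul_pos (w_pos a b x hx1)
          (Complex.normSq_pos.mpr (by simpa using hx2)))

lemma Jb_jacSymm' (a b : ℝ) (ha : -1 < a) (hb : -1 < b)
    (hJ : ∀ r t : Polynomial ℂ, IntegrableOn (fun x : ℝ => r.eval (x:ℂ) * (jacobiW a b x : ℂ) * t.eval (x:ℂ))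
      (Set.Ioo (-1:ℝ) 1))
    (r t : Polynomial ℂ) :
    Jb a b (jacOp a b r) t = Jb a b r (jacOp a b t) := by
  set u : Polynomial ℂ := derivative r * t - r * derivative t with hu
  set g : ℝ → ℂ := fun x => (((1-x) ^ (a+1) * (1+x) ^ (b+1) : ℝ) : ℂ) * u.eval (x:ℂ) with hg
  set D : ℝ → ℂ := fun x => (jacobiW a b x : ℂ)
      * ((jacOp a b r).eval (x:ℂ) * t.eval (x:ℂ) - r.eval (x:ℂ) * (jacOp a b t).eval (x:ℂ))
    with hD
  have hdu : derivative u = derivative (derivative r) * t - r * derivative (derivative t) := by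
    rw [hu]
    simp only [derivative_sub, derivative_mul]
    ring
  have hderiv : ∀ x ∈ Set.Ioo (-1:ℝ) 1, HasDerivAt g (D x) x := by
    intro x hx
    obtain ⟨hx1, hx2⟩ := hx
    have h1x : (0:ℝ) < 1 - x := by linarith
    have h2x : (0:ℝ) < 1 + x := by linarith
    have d1 : HasDerivAt (fun y : ℝ => (1-y) ^ (a+1)) (-(a+1) * (1-x) ^ a) x := by
      have hid : HasDerivAt (fun y : ℝ => 1 - y) (-1) x := by
        simpa using (hasDerivAt_id x).const_sub 1
      have h := hid.rpow_const (p := a+1) (Or.inl h1x.ne')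
      have he : -1 * (a+1) * (1-x) ^ (a+1-1) = -(a+1) * (1-x) ^ a := by
        rw [add_sub_cancel_right]; ring
      rwa [he] at h
    have d2 : HasDerivAt (fun y : ℝ => (1+y) ^ (b+1)) ((b+1) * (1+x) ^ b) x := by
      have hid : HasDerivAt (fun y : ℝ => 1 + y) (1 : ℝ) x := by
        simpa using (hasDerivAt_id x).const_add 1
      have h := hid.rpow_const (p := b+1) (Or.inl h2x.ne')
      have he : 1 * (b+1) * (1+x) ^ (b+1-1) = (b+1) * (1+x) ^ b := by
        rw [add_sub_cancel_right]; ring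
      rwa [he] at h
    have hgd := ((d1.mul d2).ofReal_comp).mul ((Polynomial.hasDerivAt u (x:ℂ)).comp_ofReal)
    refine hgd.congr_deriv ?_
    symm
    rw [hD, hdu]
    show (jacobiW a b x : ℂ) * _ = _
    have e1 : ((1-x) ^ (a+1) : ℝ) = (1-x) ^ a * (1-x) := Real.rpow_add_one h1x.ne' a
    have e2 : ((1+x) ^ (b+1) : ℝ) = (1+x) ^ b * (1+x) := Real.rpow_add_one h2x.ne' b
    show _ = ((-(a+1) * (1-x) ^ a * (1+x) ^ (b+1)
        + (1-x) ^ (a+1) * ((b+1) * (1+x) ^ b) : ℝ) : ℂ) * u.eval (x:ℂ)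
        + (((1-x) ^ (a+1) * (1+x) ^ (b+1) : ℝ) : ℂ)
          * (derivative (derivative r) * t - r * derivative (derivative t)).eval (x:ℂ)
    rw [e1, e2]
    simp only [jacobiW, jacOp, hu, eval_sub, eval_mul, eval_add, eval_one, eval_pow, eval_X,
      eval_C]
    push_cast
    ring
  have hint0 : IntegrableOn D (Set.Ioo (-1:ℝ) 1) :=
    IntegrableOn.congr_fun ((hJ (jacOp a b r) t).sub (hJ r (jacOp a b t)))
      (fun x _ => by simp only [Pi.sub_apply, hD]; ring) measurableSet_Ioo
  have hint : IntervalIntegrable D volume (-1) 1 := by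
    rw [intervalIntegrable_iff_integrableOn_Ioo_of_le (by norm_num)]
    exact hint0
  have hucont : Continuous fun y : ℝ => u.eval (y:ℂ) :=
    u.continuous.comp Complex.continuous_ofReal
  have hlim1 : Filter.Tendsto g (nhdsWithin 1 (Set.Iio 1)) (nhds 0) := by
    have hc1 : ContinuousAt (fun y : ℝ => (1-y) ^ (a+1)) 1 := by
      have h : ContinuousAt ((fun s : ℝ => s ^ (a+1)) ∘ (fun y : ℝ => 1 - y)) 1 := by
        apply ContinuousAt.comp
        · show ContinuousAt (fun s : ℝ => s ^ (a+1)) ((1:ℝ) - 1)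
          rw [show (1:ℝ) - 1 = 0 by norm_num]
          exact Real.continuousAt_rpow_const 0 _ (Or.inr (by linarith))
        · exact (continuous_const.sub continuous_id).continuousAt
      exact h
    have hc2 : ContinuousAt (fun y : ℝ => (1+y) ^ (b+1)) 1 := by
      have h : ContinuousAt ((fun s : ℝ => s ^ (b+1)) ∘ (fun y : ℝ => 1 + y)) 1 := by
        apply ContinuousAt.comp
        · exact Real.continuousAt_rpow_const _ _ (Or.inl (by norm_num))
        · exact (continuous_const.add continuous_id).continuousAt
      exact h
    have hcont : ContinuousAt g 1 :=
      ((Complex.continuous_ofReal.continuousAt).comp (hc1.mul hc2)).mul hucont.continuousAt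
    have hval : g 1 = 0 := by
      rw [hg]
      show (((1-(1:ℝ)) ^ (a+1) * (1+1) ^ (b+1) : ℝ) : ℂ) * u.eval ((1:ℝ):ℂ) = 0
      rw [show (1:ℝ) - 1 = 0 by norm_num, Real.zero_rpow (by linarith : a + 1 ≠ 0)]
      simp
    have h := hcont.tendsto
    rw [hval] at h
    exact h.mono_left nhdsWithin_le_nhds
  have hlim2 : Filter.Tendsto g (nhdsWithin (-1) (Set.Ioi (-1))) (nhds 0) := by
    have hc1 : ContinuousAt (fun y : ℝ => (1-y) ^ (a+1)) (-1) := by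
      have h : ContinuousAt ((fun s : ℝ => s ^ (a+1)) ∘ (fun y : ℝ => 1 - y)) (-1) := by
        apply ContinuousAt.comp
        · exact Real.continuousAt_rpow_const _ _ (Or.inl (by norm_num))
        · exact (continuous_const.sub continuous_id).continuousAt
      exact h
    have hc2 : ContinuousAt (fun y : ℝ => (1+y) ^ (b+1)) (-1) := by
      have h : ContinuousAt ((fun s : ℝ => s ^ (b+1)) ∘ (fun y : ℝ => 1 + y)) (-1) := by
        apply ContinuousAt.comp
        · show ContinuousAt (fun s : ℝ => s ^ (b+1)) ((1:ℝ) + (-1))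
          rw [show (1:ℝ) + (-1) = 0 by norm_num]
          exact Real.continuousAt_rpow_const 0 _ (Or.inr (by linarith))
        · exact (continuous_const.add continuous_id).continuousAt
      exact h
    have hcont : ContinuousAt g (-1) :=
      ((Complex.continuous_ofReal.continuousAt).comp (hc1.mul hc2)).mul hucont.continuousAt
    have hval : g (-1) = 0 := by
      rw [hg]
      show (((1-(-1:ℝ)) ^ (a+1) * (1+(-1)) ^ (b+1) : ℝ) : ℂ) * u.eval ((-1:ℝ):ℂ) = 0
      rw [show (1:ℝ) + (-1) = 0 by norm_num, Real.zero_rpow (by linarith : b + 1 ≠ 0)]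
      simp
    have h := hcont.tendsto
    rw [hval] at h
    exact h.mono_left nhdsWithin_le_nhds
  have hFTC := intervalIntegral.integral_eq_sub_of_hasDerivAt_of_tendsto
    (by norm_num : (-1:ℝ) < 1) hderiv hint hlim2 hlim1
  have hIoo : ∫ x in Set.Ioo (-1:ℝ) 1, D x = 0 := by
    rw [← MeasureTheory.integral_Ioc_eq_integral_Ioo,
      ← intervalIntegral.integral_of_le (by norm_num : (-1:ℝ) ≤ 1), hFTC]
    ring
  have hJd : Jb a b (jacOp a b r) t - Jb a b r (jacOp a b t)
      = ∫ x in Set.Ioo (-1:ℝ) 1, D x := by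
    unfold Jb
    rw [← integral_sub (hJ (jacOp a b r) t) (hJ r (jacOp a b t))]
    congr 1
    funext x
    rw [hD]
    ring
  rw [hIoo] at hJd
  exact sub_eq_zero.mp hJd

/-! ### The bilinear form -/


/-- integrability of polynomial integrands (analysis, proved below). -/
lemma intJb (a b : ℝ) (ha : -1 < a) (hb : -1 < b) (r t : Polynomial ℂ) :
    IntegrableOn (fun x : ℝ => r.eval (x:ℂ) * (jacobiW a b x : ℂ) * t.eval (x:ℂ))
      (Set.Ioo (-1:ℝ) 1) :=
  intJb' a b ha hb r t

/-- positive-definiteness (analysis, proved below). -/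
lemma Jb_selfconj_ne (a b : ℝ) (ha : -1 < a) (hb : -1 < b) (r : Polynomial ℂ) (hr : r ≠ 0) :
    Jb a b r (r.map (starRingEnd ℂ)) ≠ 0 :=
  Jb_selfconj_ne' a b ha hb r hr

/-- symmetry of the Jacobi operator (analysis, proved below). -/
lemma Jb_jacSymm (a b : ℝ) (ha : -1 < a) (hb : -1 < b) (r t : Polynomial ℂ) :
    Jb a b (jacOp a b r) t = Jb a b r (jacOp a b t) :=
  Jb_jacSymm' a b ha hb (fun r t => intJb' a b ha hb r t) r t

lemma Jb_comm (a b : ℝ) (p q : Polynomial ℂ) : Jb a b p q = Jb a b q p := by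
  unfold Jb
  congr 1
  funext x
  ring

lemma Jb_add_left (a b : ℝ) (ha : -1 < a) (hb : -1 < b) (r r' t : Polynomial ℂ) :
    Jb a b (r + r') t = Jb a b r t + Jb a b r' t := by
  unfold Jb
  have h : (fun x : ℝ => (r + r').eval (x:ℂ) * (jacobiW a b x : ℂ) * t.eval (x:ℂ))
      = (fun x : ℝ => r.eval (x:ℂ) * (jacobiW a b x : ℂ) * t.eval (x:ℂ)
        + r'.eval (x:ℂ) * (jacobiW a b x : ℂ) * t.eval (x:ℂ)) := by
    funext x; simp only [eval_add]; ring
  rw [h, integral_add (intJb a b ha hb r t) (intJb a b ha hb r' t)]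

lemma Jb_Cmul_left (a b : ℝ) (c : ℂ) (r t : Polynomial ℂ) :
    Jb a b (C c * r) t = c * Jb a b r t := by
  unfold Jb
  have h : (fun x : ℝ => (C c * r).eval (x:ℂ) * (jacobiW a b x : ℂ) * t.eval (x:ℂ))
      = fun x : ℝ => c • (r.eval (x:ℂ) * (jacobiW a b x : ℂ) * t.eval (x:ℂ)) := by
    funext x; simp only [eval_mul, eval_C, smul_eq_mul]; ring
  rw [h, integral_smul, smul_eq_mul]

lemma Jb_zero_left (a b : ℝ) (t : Polynomial ℂ) : Jb a b 0 t = 0 := by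
  unfold Jb
  simp

lemma Jb_sum_left (a b : ℝ) (ha : -1 < a) (hb : -1 < b) (s : Finset ℕ) (c : ℕ → ℂ)
    (g : ℕ → Polynomial ℂ) (t : Polynomial ℂ) :
    Jb a b (∑ l ∈ s, C (c l) * g l) t = ∑ l ∈ s, c l * Jb a b (g l) t := by
  induction s using Finset.induction_on with
  | empty => simpa using Jb_zero_left a b t
  | @insert x s hx ih =>
    rw [Finset.sum_insert hx, Finset.sum_insert hx, Jb_add_left a b ha hb,
      Jb_Cmul_left, ih]

lemma sInner_eq_Jb (a b : ℝ) (p q : Polynomial ℂ) :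
    sInner (Set.Ioo (-1:ℝ) 1) (jacobiW a b) p q = Jb a b p (q.map (starRingEnd ℂ)) := by
  unfold sInner Jb
  congr 1
  funext x
  rw [conj_eval]

/-! ### consequences of orthogonality -/

section OPS

variable (a b : ℝ) (ha : -1 < a) (hb : -1 < b) (p : ℕ → Polynomial ℂ)
  (hp : SMonicOPS (Set.Ioo (-1:ℝ) 1) (jacobiW a b) p)

include ha hb hp

lemma ops_real : ∀ k, (p k).map (starRingEnd ℂ) = p k := by
  intro k
  have hmon : ∀ l, (p l).Monic := fun l => (hp.1 l).1
  have hdeg : ∀ l, (p l).natDegree = l := fun l => (hp.1 l).2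
  have horth : ∀ k l, k ≠ l → Jb a b (p k) ((p l).map (starRingEnd ℂ)) = 0 := by
    intro k l hkl
    rw [← sInner_eq_Jb]
    exact hp.2 k l hkl
  have hmonc : ∀ l, ((p l).map (starRingEnd ℂ)).Monic := fun l => (hmon l).map _
  have hdegc : ∀ l, ((p l).map (starRingEnd ℂ)).natDegree = l := by
    intro l
    rw [natDegree_map_eq_of_injective (RingHom.injective _)]
    exact hdeg l
  match k with
  | 0 =>
    have h0 : p 0 = 1 := (hmon 0).natDegree_eq_zero.mp (hdeg 0)
    rw [h0, Polynomial.map_one]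
  | (K+1) =>
    by_contra hne
    have hdne : p (K+1) - (p (K+1)).map (starRingEnd ℂ) ≠ 0 :=
      sub_ne_zero.mpr (fun h => hne h.symm)
    set d : Polynomial ℂ := p (K+1) - (p (K+1)).map (starRingEnd ℂ) with hd
    have hddeg : d.natDegree ≤ K := by
      rw [natDegree_le_iff_coeff_eq_zero]
      intro M hM
      rw [hd, coeff_sub]
      rcases eq_or_lt_of_le (Nat.succ_le_of_lt hM) with h | h
      · have h1 : (p (K+1)).coeff (K+1) = 1 := by
          have := (hmon (K+1)).coeff_natDegree; rwa [hdeg (K+1)] at this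
        have h2 : ((p (K+1)).map (starRingEnd ℂ)).coeff (K+1) = 1 := by
          have := (hmonc (K+1)).coeff_natDegree; rwa [hdegc (K+1)] at this
        rw [← h, h1, h2, sub_self]
      · rw [coeff_eq_zero_of_natDegree_lt (by rw [hdeg]; exact h),
          coeff_eq_zero_of_natDegree_lt (by rw [hdegc]; exact h), sub_self]
    obtain ⟨c1, hc1⟩ := expand_monic p hmon hdeg K d hddeg
    obtain ⟨c2, hc2⟩ := expand_monic (fun l => (p l).map (starRingEnd ℂ)) hmonc hdegc K d hddeg
    have hmapd : d.map (starRingEnd ℂ) = (p (K+1)).map (starRingEnd ℂ) - p (K+1) := by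
      rw [hd, Polynomial.map_sub]
      congr 1
      rw [Polynomial.map_map]
      have hcomp : (starRingEnd ℂ).comp (starRingEnd ℂ) = RingHom.id ℂ := by
        ext z; exact Complex.conj_conj z
      rw [hcomp, Polynomial.map_id]
    have e1 : Jb a b d ((p (K+1)).map (starRingEnd ℂ)) = 0 := by
      rw [hc1, Jb_sum_left a b ha hb]
      apply Finset.sum_eq_zero
      intro l hl
      rw [horth l (K+1) (by simp at hl; omega), mul_zero]
    have e2 : Jb a b d (p (K+1)) = 0 := by
      rw [hc2, Jb_sum_left a b ha hb]
      apply Finset.sum_eq_zero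
      intro l hl
      rw [Jb_comm, horth (K+1) l (by simp at hl; omega), mul_zero]
    have hzero : Jb a b d (d.map (starRingEnd ℂ)) = 0 := by
      rw [hmapd]
      have hsub : (p (K+1)).map (starRingEnd ℂ) - p (K+1)
          = (p (K+1)).map (starRingEnd ℂ) + (C (-1) * p (K+1)) := by
        rw [map_neg, C_1]; ring
      rw [hsub, Jb_comm, Jb_add_left a b ha hb, Jb_Cmul_left,
        Jb_comm a b ((p (K+1)).map (starRingEnd ℂ)) d, Jb_comm a b (p (K+1)) d, e1, e2]
      ring
    exact Jb_selfconj_ne a b ha hb d hdne hzero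

lemma ops_orth : ∀ k l, k ≠ l → Jb a b (p k) (p l) = 0 := by
  intro k l hkl
  have := hp.2 k l hkl
  rw [sInner_eq_Jb, ops_real a b ha hb p hp] at this
  exact this

lemma ops_norm_ne : ∀ k, Jb a b (p k) (p k) ≠ 0 := by
  intro k
  have h := Jb_selfconj_ne a b ha hb (p k) (hp.1 k).1.ne_zero
  rwa [ops_real a b ha hb p hp] at h

lemma ops_low_orth : ∀ k (r : Polynomial ℂ), r.natDegree < k → Jb a b r (p k) = 0 := by
  intro k r hr
  have hmon : ∀ l, (p l).Monic := fun l => (hp.1 l).1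
  have hdeg : ∀ l, (p l).natDegree = l := fun l => (hp.1 l).2
  obtain ⟨K, hK⟩ : ∃ K, k = K + 1 := ⟨k - 1, by omega⟩
  obtain ⟨c, hc⟩ := expand_monic p hmon hdeg K r (by omega)
  rw [hc, Jb_sum_left a b ha hb]
  apply Finset.sum_eq_zero
  intro l hl
  rw [Jb_comm, ops_orth a b ha hb p hp k l (by simp at hl; omega), mul_zero]

lemma ops_eigen : ∀ k, jacOp a b (p k)
    = C (-(k:ℂ) * ((k:ℂ) + (a:ℂ) + (b:ℂ) + 1)) * p k := by
  intro k
  have hmon : ∀ l, (p l).Monic := fun l => (hp.1 l).1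
  have hdeg : ∀ l, (p l).natDegree = l := fun l => (hp.1 l).2
  have hD : (jacOp a b (p k)).natDegree ≤ k := le_trans (natDegree_jacOp_le a b (p k))
    (le_of_eq (hdeg k))
  obtain ⟨c, hc⟩ := expand_monic p hmon hdeg k (jacOp a b (p k)) hD
  have hcl : ∀ l, l < k → c l = 0 := by
    intro l hl
    have w1 : Jb a b (jacOp a b (p k)) (p l) = c l * Jb a b (p l) (p l) := by
      rw [hc, Jb_sum_left a b ha hb]
      apply Finset.sum_eq_single_of_mem l (Finset.mem_range.mpr (by omega))
      intro l' _ hne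
      rw [Jb_comm, ops_orth a b ha hb p hp l l' (fun h => hne h.symm), mul_zero]
    have w2 : Jb a b (jacOp a b (p k)) (p l) = 0 := by
      rw [Jb_jacSymm a b ha hb, Jb_comm]
      exact ops_low_orth a b ha hb p hp k (jacOp a b (p l))
        (lt_of_le_of_lt (le_trans (natDegree_jacOp_le a b (p l)) (le_of_eq (hdeg l))) hl)
    rw [w2] at w1
    rcases mul_eq_zero.mp w1.symm with h | h
    · exact h
    · exact absurd h (ops_norm_ne a b ha hb p hp l)
  have hsingle : jacOp a b (p k) = C (c k) * p k := by
    rw [hc]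
    apply Finset.sum_eq_single_of_mem k (Finset.mem_range.mpr (by omega))
    intro l _ hne
    rw [hcl l (by simp_all; omega), map_zero, zero_mul]
  have hck : c k = -(k:ℂ) * ((k:ℂ) + (a:ℂ) + (b:ℂ) + 1) := by
    have h1 := jacOp_coeff_top a b (p k) k (hmon k) (hdeg k)
    rw [hsingle, coeff_C_mul] at h1
    have h2 : (p k).coeff k = 1 := by
      have := (hmon k).coeff_natDegree; rwa [hdeg k] at this
    rw [h2, mul_one] at h1
    exact h1
  rw [hsingle, hck]

theorem coeff_package : ∀ k, ((p k).comp LL).coeff 0 ≠ 0 ∧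
    ∀ i, ((p k).comp LL).coeff i = ((p k).comp LL).coeff 0 * (cpol a b i).eval (k:ℂ) := by
  intro k
  have hmon := (hp.1 k).1
  have hdeg := (hp.1 k).2
  set Pk : Polynomial ℂ := (p k).comp LL with hPk
  have hnat : Pk.natDegree = k := by
    rw [hPk, natDegree_comp, natDegree_LL, hdeg, mul_one]
  have heig : delOp a b Pk = C (-(k:ℂ) * ((k:ℂ) + (a:ℂ) + (b:ℂ) + 1)) * Pk := by
    rw [hPk, ← comp_jacOp_delOp, ops_eigen a b ha hb p hp k, mul_comp, C_comp]
  have hrec : ∀ i : ℕ, ((i:ℂ)+1) * ((i:ℂ)+1+(a:ℂ)) * Pk.coeff (i+1)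
      = ((i:ℂ) - (k:ℂ)) * ((i:ℂ) + (k:ℂ) + (a:ℂ) + (b:ℂ) + 1) * Pk.coeff i := by
    intro i
    have h := congrArg (fun q : Polynomial ℂ => q.coeff i) heig
    simp only [delOp_coeff, coeff_C_mul] at h
    linear_combination h
  have hform : ∀ i, Pk.coeff i = Pk.coeff 0 * (cpol a b i).eval (k:ℂ) := by
    intro i
    induction i with
    | zero => simp [cpol]
    | succ i ih =>
      have hnz1 : ((i:ℂ)+1) ≠ 0 := by
        have h1 := (Nat.cast_ne_zero (R := ℂ)).mpr (Nat.succ_ne_zero i)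
        push_cast at h1
        exact h1
      have hnz2 : ((i:ℂ)+1+(a:ℂ)) ≠ 0 := by
        have hre : ((i:ℂ)+1+(a:ℂ)) = (((i:ℝ)+1+a : ℝ) : ℂ) := by push_cast; ring
        rw [hre, Complex.ofReal_ne_zero]
        have : (0:ℝ) < (i:ℝ) + 1 + a := by
          have : (0:ℝ) ≤ (i:ℝ) := Nat.cast_nonneg i
          linarith
        linarith
      have h := hrec i
      have hstep : Pk.coeff (i+1)
          = (((i:ℂ)+1) * ((i:ℂ)+1+(a:ℂ)))⁻¹
            * (((i:ℂ) - (k:ℂ)) * ((i:ℂ) + (k:ℂ) + (a:ℂ) + (b:ℂ) + 1)) * Pk.coeff i := by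
        field_simp
        linear_combination h
      rw [hstep, ih]
      show _ = Pk.coeff 0 * (cpol a b (i+1)).eval (k:ℂ)
      rw [cpol]
      simp only [eval_mul, eval_C, eval_sub, eval_add, eval_X]
      push_cast
      ring
  have htop : Pk.coeff k = (-2:ℂ)^k := by
    have h1 : Pk.coeff k = Pk.leadingCoeff := by rw [leadingCoeff, hnat]
    rw [h1, hPk, leadingCoeff_comp (by rw [natDegree_LL]; omega), leadingCoeff_LL,
      hmon.leadingCoeff, one_mul, hdeg]
  constructor
  · intro h0
    have := hform k
    rw [h0, zero_mul, htop] at this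
    exact (pow_ne_zero k (by norm_num : (-2:ℂ) ≠ 0)) this
  · exact hform

end OPS

lemma cpol_one (a b : ℝ) : cpol a b 1
    = C ((((0:ℂ)+1) * ((0:ℂ)+1+(a:ℂ)))⁻¹) *
      ((C (0:ℂ) - X) * (X + C ((0:ℂ) + (a:ℂ) + (b:ℂ) + 1))) := by
  rw [show (1:ℕ) = 0 + 1 from rfl, cpol, cpol, one_mul]
  simp


end S16
end

/-- for Jacobi weights with `α, β > -1` and `m ≥ 1`, the weight
`w_{α+m,β}` is not a Darboux transformation of `w_{α,β}`. -/
theorem stmt16 (α β : ℝ) (hα : -1 < α) (hβ : -1 < β) (m : ℕ) (hm : 0 < m)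
    (p q : ℕ → Polynomial ℂ)
    (hp : SMonicOPS (Set.Ioo (-1) 1) (jacobiW α β) p)
    (hq : SMonicOPS (Set.Ioo (-1) 1) (jacobiW (α + m) β) q) :
    ¬ SDarboux p q := by
  intro hD
  obtain ⟨V, Nd, hV, hNd, hDW, hc⟩ := hD
  obtain ⟨F, hF⟩ := hV.1
  choose c hc0 hcV using hc
  have hαm : -1 < α + (m:ℝ) := by
    have h0 : (0:ℝ) ≤ (m:ℝ) := Nat.cast_nonneg m
    linarith
  have hppack := S16.coeff_package α β hα hβ p hp
  have hqpack := S16.coeff_package (α + (m:ℝ)) β hαm hβ q hq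
  set n : ℕ := F.support.sup id with hn
  have hjn : ∀ j ∈ F.support, j ≤ n := fun j hj => Finset.le_sup (f := id) hj
  set ee : ℕ → Polynomial ℂ := fun i => ∑ i' ∈ Finset.range (i+n+1),
      Polynomial.C (((sAct F (S16.LI ^ i')).comp S16.LL).coeff i) * S16.cpol α β i' with hee
  have key1 : ∀ k i : ℕ,
      ((p k).comp S16.LL).coeff 0 * (ee i).eval (k:ℂ)
        = c k * (((q k).comp S16.LL).coeff 0 * (S16.cpol (α+(m:ℝ)) β i).eval (k:ℂ)) := by
    intro k i
    have hdegP : ((p k).comp S16.LL).natDegree < (max k (i+n)) + 1 := by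
      rw [natDegree_comp, S16.natDegree_LL, (hp.1 k).2, mul_one]
      omega
    have hPP : p k = ∑ i' ∈ Finset.range (max k (i+n) + 1),
        Polynomial.C (((p k).comp S16.LL).coeff i') * S16.LI ^ i' := by
      conv_lhs => rw [← Polynomial.comp_X (p := p k), ← S16.LL_comp_LI,
        ← Polynomial.comp_assoc, Polynomial.as_sum_range' ((p k).comp S16.LL) _ hdegP]
      rw [Polynomial.sum_comp]
      apply Finset.sum_congr rfl
      intro i' _
      rw [← C_mul_X_pow_eq_monomial, mul_comp, C_comp, X_pow_comp]
    have h3 : ((V (p k)).comp S16.LL).coeff i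
        = ∑ i' ∈ Finset.range (max k (i+n) + 1),
          (((p k).comp S16.LL).coeff i')
            * ((sAct F (S16.LI ^ i')).comp S16.LL).coeff i := by
      conv_lhs => rw [hF, hPP, S16.sAct_sum]
      rw [Polynomial.sum_comp, finset_sum_coeff]
      apply Finset.sum_congr rfl
      intro i' _
      rw [mul_comp, C_comp, coeff_C_mul]
    have h4 : ((V (p k)).comp S16.LL).coeff i
        = c k * (((q k).comp S16.LL).coeff i) := by
      rw [hcV k, mul_comp, C_comp, coeff_C_mul]
    have h5 : ∑ i' ∈ Finset.range (max k (i+n) + 1),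
          (((p k).comp S16.LL).coeff i')
            * ((sAct F (S16.LI ^ i')).comp S16.LL).coeff i
        = ∑ i' ∈ Finset.range (i+n+1),
          (((p k).comp S16.LL).coeff i')
            * ((sAct F (S16.LI ^ i')).comp S16.LL).coeff i := by
      symm
      apply Finset.sum_subset (Finset.range_subset_range.mpr (by omega))
      intro i' _ hnotin
      rw [S16.window F n hjn i i' (by simp only [Finset.mem_range] at hnotin; omega),
        mul_zero]
    have h6 : ∑ i' ∈ Finset.range (i+n+1),
          (((p k).comp S16.LL).coeff i')
            * ((sAct F (S16.LI ^ i')).comp S16.LL).coeff i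
        = ((p k).comp S16.LL).coeff 0 * (ee i).eval (k:ℂ) := by
      simp only [hee, eval_finset_sum, eval_mul, eval_C]
      rw [Finset.mul_sum]
      apply Finset.sum_congr rfl
      intro i' _
      rw [(hppack k).2 i']
      ring
    rw [← h6, ← h5, ← h3, h4, (hqpack k).2 i]
  have hu : ∀ k : ℕ, ((p k).comp S16.LL).coeff 0 ≠ 0 := fun k => (hppack k).1
  have hv : ∀ k : ℕ, ((q k).comp S16.LL).coeff 0 ≠ 0 := fun k => (hqpack k).1
  have he0 : ∀ k : ℕ, ((p k).comp S16.LL).coeff 0 * (ee 0).eval (k:ℂ)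
      = c k * ((q k).comp S16.LL).coeff 0 := by
    intro k
    have h := key1 k 0
    rwa [show S16.cpol (α+(m:ℝ)) β 0 = 1 from rfl, eval_one, mul_one] at h
  have hene : ee 0 ≠ 0 := by
    intro h0
    have h := he0 0
    rw [h0, eval_zero, mul_zero] at h
    exact (mul_ne_zero (hc0 0) (hv 0)) h.symm
  have hei : ∀ i, ee i = ee 0 * S16.cpol (α+(m:ℝ)) β i := by
    intro i
    apply Polynomial.eq_of_infinite_eval_eq
    apply Set.infinite_of_injective_forall_mem (f := fun k : ℕ => (k:ℂ))
      Nat.cast_injective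
    intro k
    show (ee i).eval (k:ℂ) = (ee 0 * S16.cpol (α+(m:ℝ)) β i).eval (k:ℂ)
    rw [eval_mul]
    apply mul_left_cancel₀ (hu k)
    rw [key1 k i]
    conv_rhs => rw [← mul_assoc, he0 k]
    ring
  have hsym : ∀ i, (ee i).comp (Polynomial.C (-((α:ℂ)+(β:ℂ)+1)) - X) = ee i := by
    intro i
    simp only [hee]
    rw [Polynomial.sum_comp]
    apply Finset.sum_congr rfl
    intro i' _
    rw [mul_comp, C_comp, S16.cpol_comp_symm]
  have hfinal : S16.cpol (α+(m:ℝ)) β 1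
      = (S16.cpol (α+(m:ℝ)) β 1).comp (Polynomial.C (-((α:ℂ)+(β:ℂ)+1)) - X) := by
    apply mul_left_cancel₀ hene
    calc ee 0 * S16.cpol (α+(m:ℝ)) β 1 = ee 1 := (hei 1).symm
      _ = (ee 1).comp (Polynomial.C (-((α:ℂ)+(β:ℂ)+1)) - X) := (hsym 1).symm
      _ = (ee 0 * S16.cpol (α+(m:ℝ)) β 1).comp (Polynomial.C (-((α:ℂ)+(β:ℂ)+1)) - X) := by
          rw [← hei 1]
      _ = (ee 0).comp (Polynomial.C (-((α:ℂ)+(β:ℂ)+1)) - X)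
            * (S16.cpol (α+(m:ℝ)) β 1).comp (Polynomial.C (-((α:ℂ)+(β:ℂ)+1)) - X) :=
          mul_comp _ _ _
      _ = ee 0 * (S16.cpol (α+(m:ℝ)) β 1).comp (Polynomial.C (-((α:ℂ)+(β:ℂ)+1)) - X) := by
          rw [hsym 0]
  -- evaluate the symmetry identity at two points
  have hdne : (((0:ℂ)+1) * ((0:ℂ)+1+((α+(m:ℝ) : ℝ):ℂ))) ≠ 0 := by
    apply mul_ne_zero (by norm_num)
    have hre : ((0:ℂ)+1+((α+(m:ℝ) : ℝ):ℂ)) = ((1 + (α + (m:ℝ)) : ℝ) : ℂ) := by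
      push_cast; ring
    rw [hre, Complex.ofReal_ne_zero]
    linarith
  have hE1 := congrArg (Polynomial.eval (-((α:ℂ)+(β:ℂ)+1))) hfinal
  have hE2 := congrArg (Polynomial.eval ((m:ℂ))) hfinal
  rw [eval_comp] at hE1 hE2
  rw [S16.cpol_one] at hE1 hE2
  simp only [eval_mul, eval_C, eval_sub, eval_add, eval_X, eval_neg] at hE1 hE2
  have E1 := mul_left_cancel₀ (inv_ne_zero hdne) hE1
  have E2 := mul_left_cancel₀ (inv_ne_zero hdne) hE2
  push_cast at E1 E2
  have hsm : ((α:ℂ)+(β:ℂ)+1) * (m:ℂ) = 0 := by linear_combination E1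
  have hm2 : (m:ℂ) * (m:ℂ) = 0 := by
    linear_combination (-(1:ℂ)/2) * E2 - (1/2 : ℂ) * hsm
  have hmz : (m:ℂ) = 0 := by
    rcases mul_eq_zero.mp hm2 with h | h <;> exact h
  have : m = 0 := Nat.cast_eq_zero.mp hmz
  omega
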